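/- Let a₁, a₂ ∈ ℝ^{2n} (n ≥ 2) be linearly independent and a = a₁ + i a₂. Then there exists x in the real symplectic group Sp(n,ℝ) = {x ∈ GL(2n,ℝ) : x J xᵀ = J} such that xᵀ a is isotropic with respect to the standard complex bilinear form on ℂ^{2n}. -/
import Mathlib
open Matrix Complex

namespace Stmt10Aux

variable {n : ℕ}

noncomputable def Jn (n : ℕ) : Matrix (Fin n ⊕ Fin n) (Fin n ⊕ Fin n) ℝ :=
  Matrix.fromBlocks 0 1 (-1) 0

noncomputable def ω (u v : Fin n ⊕ Fin n → ℝ) : ℝ := u ⬝ᵥ (Jn n *ᵥ v)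

lemma Jn_eq_neg_J : Jn n = -(Matrix.J (Fin n) ℝ) := by
  simp [Jn, Matrix.J, fromBlocks_neg]

lemma Jn_transpose : (Jn n)ᵀ = -(Jn n) := by
  simp [Jn, fromBlocks_transpose, fromBlocks_neg]

lemma Jn_mul_Jn : (Jn n) * (Jn n) = -1 := by
  simp [Jn, fromBlocks_multiply]
  rw [← fromBlocks_one (l := Fin n) (m := Fin n) (α := ℝ), fromBlocks_neg]
  simp

lemma omega_eq (u v : Fin n ⊕ Fin n → ℝ) :
    ω u v = (∑ i, u (Sum.inl i) * v (Sum.inr i)) - ∑ i, u (Sum.inr i) * v (Sum.inl i) := by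
  simp [ω, Jn, dotProduct, Fintype.sum_sum_type, fromBlocks_mulVec, neg_mulVec, one_mulVec,
    mul_neg, sub_eq_add_neg, ← Finset.sum_neg_distrib]

lemma omega_self (v : Fin n ⊕ Fin n → ℝ) : ω v v = 0 := by
  rw [omega_eq, sub_eq_zero]
  exact Finset.sum_congr rfl fun i _ => mul_comm _ _

lemma omega_skew (u v : Fin n ⊕ Fin n → ℝ) : ω u v = -ω v u := by
  rw [omega_eq, omega_eq]
  have h1 : ∑ i, u (Sum.inl i) * v (Sum.inr i) = ∑ i, v (Sum.inr i) * u (Sum.inl i) :=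
    Finset.sum_congr rfl fun i _ => mul_comm _ _
  have h2 : ∑ i, u (Sum.inr i) * v (Sum.inl i) = ∑ i, v (Sum.inl i) * u (Sum.inr i) :=
    Finset.sum_congr rfl fun i _ => mul_comm _ _
  rw [h1, h2]; ring

lemma omega_add_right (u v w : Fin n ⊕ Fin n → ℝ) : ω u (v + w) = ω u v + ω u w := by
  simp [ω, mulVec_add, dotProduct_add]

lemma omega_sub_right (u v w : Fin n ⊕ Fin n → ℝ) : ω u (v - w) = ω u v - ω u w := by
  simp [ω, mulVec_sub, dotProduct_sub]

lemma omega_smul_right (u : Fin n ⊕ Fin n → ℝ) (r : ℝ) (v : Fin n ⊕ Fin n → ℝ) :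
    ω u (r • v) = r * ω u v := by
  simp [ω, mulVec_smul, dotProduct_smul]

lemma omega_add_left (u v w : Fin n ⊕ Fin n → ℝ) : ω (u + v) w = ω u w + ω v w := by
  simp [ω, add_dotProduct]

lemma omega_single_inl (u : Fin n ⊕ Fin n → ℝ) (j : Fin n) :
    ω u (Pi.single (Sum.inl j) 1) = -u (Sum.inr j) := by
  simp [omega_eq, Pi.single_apply]

lemma omega_single_inr (u : Fin n ⊕ Fin n → ℝ) (j : Fin n) :
    ω u (Pi.single (Sum.inr j) 1) = u (Sum.inl j) := by
  simp [omega_eq, Pi.single_apply]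


lemma vmv_mulVec {m : Type*} [Fintype m] (v w x : m → ℝ) :
    vecMulVec v w *ᵥ x = (w ⬝ᵥ x) • v := by
  funext i
  simp only [vecMulVec, mulVec, dotProduct, of_apply, Pi.smul_apply, smul_eq_mul,
    Finset.sum_mul]
  exact Finset.sum_congr rfl fun j _ => by ring

lemma vmv_transpose {m : Type*} (v w : m → ℝ) : (vecMulVec v w)ᵀ = vecMulVec w v := by
  ext i j; simp [vecMulVec, mul_comm]

lemma vmv_mul {m : Type*} [Fintype m] (v w : m → ℝ) (M : Matrix m m ℝ) :
    vecMulVec v w * M = vecMulVec v (M.vecMul w) := by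
  ext i j
  simp only [vecMulVec, Matrix.mul_apply, of_apply, vecMul, dotProduct, Finset.mul_sum]
  exact Finset.sum_congr rfl fun k _ => by ring

lemma mul_vmv {m : Type*} [Fintype m] (v w : m → ℝ) (M : Matrix m m ℝ) :
    M * vecMulVec v w = vecMulVec (M *ᵥ v) w := by
  ext i j
  simp only [vecMulVec, Matrix.mul_apply, of_apply, mulVec, dotProduct, Finset.sum_mul]
  exact Finset.sum_congr rfl fun k _ => by ring

lemma vmv_mul_vmv {m : Type*} [Fintype m] (a b c d : m → ℝ) :
    vecMulVec a b * vecMulVec c d = (b ⬝ᵥ c) • vecMulVec a d := by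
  ext i j
  simp only [vecMulVec, Matrix.mul_apply, of_apply, dotProduct, Matrix.smul_apply, smul_eq_mul,
    Finset.sum_mul]
  exact Finset.sum_congr rfl fun k _ => by ring

variable {n : ℕ}

noncomputable def Tm (v : Fin n ⊕ Fin n → ℝ) (l : ℝ) : Matrix (Fin n ⊕ Fin n) (Fin n ⊕ Fin n) ℝ :=
  1 + l • vecMulVec v (Jn n *ᵥ v)

lemma Tm_mulVec (v : Fin n ⊕ Fin n → ℝ) (l : ℝ) (x : Fin n ⊕ Fin n → ℝ) :
    Tm v l *ᵥ x = x + (l * ω x v) • v := by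
  rw [Tm, add_mulVec, one_mulVec, smul_mulVec, vmv_mulVec, smul_smul,
    dotProduct_comm (Jn n *ᵥ v) x]
  rfl

def Sp (y : Matrix (Fin n ⊕ Fin n) (Fin n ⊕ Fin n) ℝ) : Prop := y * Jn n * yᵀ = Jn n

lemma sp_iff_mem (y : Matrix (Fin n ⊕ Fin n) (Fin n ⊕ Fin n) ℝ) :
    Sp y ↔ y ∈ Matrix.symplecticGroup (Fin n) ℝ := by
  rw [SymplecticGroup.mem_iff, Sp, Jn_eq_neg_J, Matrix.mul_neg, Matrix.neg_mul, neg_inj]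

lemma Sp.mul {y z : Matrix (Fin n ⊕ Fin n) (Fin n ⊕ Fin n) ℝ} (hy : Sp y) (hz : Sp z) :
    Sp (y * z) := by
  rw [sp_iff_mem] at *
  exact mul_mem hy hz

lemma Sp.transpose {y : Matrix (Fin n ⊕ Fin n) (Fin n ⊕ Fin n) ℝ} (hy : Sp y) : Sp yᵀ := by
  rw [sp_iff_mem] at *
  exact SymplecticGroup.transpose_mem hy

lemma Sp.isUnit {y : Matrix (Fin n ⊕ Fin n) (Fin n ⊕ Fin n) ℝ} (hy : Sp y) : IsUnit y := by
  rw [sp_iff_mem] at hy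
  exact (Matrix.isUnit_iff_isUnit_det _).2 (SymplecticGroup.symplectic_det hy)

lemma Tm_sp (v : Fin n ⊕ Fin n → ℝ) (l : ℝ) : Sp (Tm v l) := by
  have hneg1 : ((-1 : Matrix (Fin n ⊕ Fin n) (Fin n ⊕ Fin n) ℝ)) *ᵥ v = -v := by
    rw [show (-1 : Matrix (Fin n ⊕ Fin n) (Fin n ⊕ Fin n) ℝ) = -(1 : Matrix _ _ ℝ) from rfl,
      neg_mulVec, one_mulVec]
  have hw2 : Jn n *ᵥ (Jn n *ᵥ v) = -v := by
    rw [mulVec_mulVec, Jn_mul_Jn, hneg1]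
  have hw1 : Matrix.vecMul (Jn n *ᵥ v) (Jn n) = v := by
    nth_rewrite 2 [show Jn n = ((Jn n)ᵀ)ᵀ from (transpose_transpose _).symm]
    rw [vecMul_transpose, Jn_transpose, neg_mulVec, hw2, neg_neg]
  rw [Sp, Tm, transpose_add, transpose_one, transpose_smul, vmv_transpose]
  rw [add_mul, add_mul, one_mul, Matrix.smul_mul, vmv_mul, hw1]
  rw [mul_add, mul_add, mul_one, Matrix.mul_smul, mul_vmv, hw2]
  rw [mul_one, Matrix.smul_mul, Matrix.mul_smul, vmv_mul_vmv,
    show v ⬝ᵥ (Jn n *ᵥ v) = (0:ℝ) from omega_self v, zero_smul, smul_zero, smul_zero,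
    show vecMulVec (-v) v = -(vecMulVec v v) from by ext i j; simp [vecMulVec], smul_neg]
  abel

lemma Sp.omega {y : Matrix (Fin n ⊕ Fin n) (Fin n ⊕ Fin n) ℝ} (hy : Sp y)
    (u v : Fin n ⊕ Fin n → ℝ) : ω (y *ᵥ u) (y *ᵥ v) = ω u v := by
  have h' : yᵀ * Jn n * y = Jn n := by
    have := hy.transpose
    rwa [Sp, transpose_transpose] at this
  show (y *ᵥ u) ⬝ᵥ (Jn n *ᵥ (y *ᵥ v)) = u ⬝ᵥ (Jn n *ᵥ v)
  rw [mulVec_mulVec, dotProduct_mulVec, vecMul_mulVec, ← Matrix.mul_assoc, h',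
    ← dotProduct_mulVec]


lemma Tm_move {a b : Fin n ⊕ Fin n → ℝ} (h : ω a b ≠ 0) :
    Tm (b - a) (ω a b)⁻¹ *ᵥ a = b := by
  rw [Tm_mulVec, omega_sub_right, omega_self, sub_zero, inv_mul_cancel₀ h, one_smul,
    add_comm, sub_add_cancel]

lemma Tm_fix {e v : Fin n ⊕ Fin n → ℝ} (l : ℝ) (h : ω e v = 0) : Tm v l *ᵥ e = e := by
  rw [Tm_mulVec, h, mul_zero, zero_smul, add_zero]

/-- map any nonzero vector to the basis vector `E (inl i)` by a symplectic matrix -/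
lemma to_E1 (i : Fin n) (a : Fin n ⊕ Fin n → ℝ) (ha : a ≠ 0) :
    ∃ y, Sp y ∧ y *ᵥ a = Pi.single (Sum.inl i) 1 := by
  set e : Fin n ⊕ Fin n → ℝ := Pi.single (Sum.inl i) 1 with he
  set f : Fin n ⊕ Fin n → ℝ := Pi.single (Sum.inr i) 1 with hf
  have hfe : ω f e = -1 := by
    rw [he, omega_single_inl, hf, Pi.single_eq_same]
  by_cases h1 : ω a e ≠ 0
  · exact ⟨_, Tm_sp _ _, Tm_move h1⟩
  · have hz : ∃ z, ω a z ≠ 0 ∧ ω z e ≠ 0 := by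
      obtain ⟨k, hk⟩ := Function.ne_iff.1 ha
      simp only [Pi.zero_apply] at hk
      have hz0 : ∃ z₀ : Fin n ⊕ Fin n → ℝ, ω a z₀ ≠ 0 := by
        rcases k with j | j
        · exact ⟨Pi.single (Sum.inr j) 1, by rw [omega_single_inr]; exact hk⟩
        · exact ⟨Pi.single (Sum.inl j) 1, by rw [omega_single_inl]; simpa using hk⟩
      obtain ⟨z₀, haz0⟩ := hz0
      by_cases h2 : ω z₀ e ≠ 0
      · exact ⟨z₀, haz0, h2⟩
      · by_cases h3 : ω a f ≠ 0
        · exact ⟨f, h3, by rw [hfe]; norm_num⟩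
        · push_neg at h2 h3
          refine ⟨z₀ + f, ?_, ?_⟩
          · rw [omega_add_right, h3, add_zero]; exact haz0
          · rw [omega_add_left, h2, hfe]; norm_num
    obtain ⟨z, haz, hze⟩ := hz
    refine ⟨Tm (e - z) (ω z e)⁻¹ * Tm (z - a) (ω a z)⁻¹, (Tm_sp _ _).mul (Tm_sp _ _), ?_⟩
    rw [← mulVec_mulVec, Tm_move haz, Tm_move hze]

/-- move `u` to `c • F i` fixing `E i`, when `ω (E i) u = c ≠ 0`. -/
lemma fix_move_ne (i : Fin n) (u : Fin n ⊕ Fin n → ℝ) (c : ℝ) (hc : c ≠ 0)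
    (hu : ω (Pi.single (Sum.inl i) 1) u = c) :
    ∃ y, Sp y ∧ y *ᵥ Pi.single (Sum.inl i) 1 = Pi.single (Sum.inl i) 1 ∧
      y *ᵥ u = c • (Pi.single (Sum.inr i) 1 : Fin n ⊕ Fin n → ℝ) := by
  set e : Fin n ⊕ Fin n → ℝ := Pi.single (Sum.inl i) 1 with he
  set f : Fin n ⊕ Fin n → ℝ := Pi.single (Sum.inr i) 1 with hf
  set w : Fin n ⊕ Fin n → ℝ := c • f with hwdef
  have hef : ω e f = 1 := by rw [hf, omega_single_inr, he, Pi.single_eq_same]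
  have hee : ω e e = 0 := omega_self e
  have hew : ω e w = c := by rw [hwdef, omega_smul_right, hef, mul_one]
  by_cases h1 : ω u w ≠ 0
  · refine ⟨Tm (w - u) (ω u w)⁻¹, Tm_sp _ _, ?_, Tm_move h1⟩
    exact Tm_fix _ (by rw [omega_sub_right, hew, hu, sub_self])
  · push_neg at h1
    set z : Fin n ⊕ Fin n → ℝ := u + e with hz
    have hue : ω u e = -c := by rw [omega_skew, hu]
    have huz : ω u z ≠ 0 := by
      rw [hz, omega_add_right, omega_self, zero_add, hue]
      simpa using hc
    have hzw : ω z w ≠ 0 := by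
      rw [hz, omega_add_left, h1, hew, zero_add]; exact hc
    have hfix1 : Tm (z - u) (ω u z)⁻¹ *ᵥ e = e :=
      Tm_fix _ (by rw [omega_sub_right, hz, omega_add_right, hee]; ring)
    have hfix2 : Tm (w - z) (ω z w)⁻¹ *ᵥ e = e :=
      Tm_fix _ (by rw [omega_sub_right, hew, hz, omega_add_right, hu, hee]; ring)
    refine ⟨Tm (w - z) (ω z w)⁻¹ * Tm (z - u) (ω u z)⁻¹, (Tm_sp _ _).mul (Tm_sp _ _), ?_, ?_⟩
    · rw [← mulVec_mulVec, hfix1, hfix2]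
    · rw [← mulVec_mulVec, Tm_move huz, Tm_move hzw]

/-- move `u` to `E j` fixing `E i`, when `ω (E i) u = 0` and `u` not a multiple of `E i`. -/
lemma fix_move_zero (i j : Fin n) (hij : i ≠ j) (u : Fin n ⊕ Fin n → ℝ)
    (hu : ω (Pi.single (Sum.inl i) 1) u = 0)
    (hlin : ∀ r : ℝ, u ≠ r • (Pi.single (Sum.inl i) 1 : Fin n ⊕ Fin n → ℝ)) :
    ∃ y, Sp y ∧ y *ᵥ Pi.single (Sum.inl i) 1 = Pi.single (Sum.inl i) 1 ∧
      y *ᵥ u = Pi.single (Sum.inl j) 1 := by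
  set e : Fin n ⊕ Fin n → ℝ := Pi.single (Sum.inl i) 1 with he
  set w : Fin n ⊕ Fin n → ℝ := Pi.single (Sum.inl j) 1 with hw
  set f2 : Fin n ⊕ Fin n → ℝ := Pi.single (Sum.inr j) 1 with hf2
  have hee : ω e e = 0 := omega_self e
  have hew : ω e w = 0 := by
    rw [hw, omega_single_inl, he]; simp [Pi.single_apply]
  have hef2 : ω e f2 = 0 := by
    rw [hf2, omega_single_inr, he]; simp [Pi.single_apply, Ne.symm hij]
  have hf2w : ω f2 w = -1 := by
    rw [hw, omega_single_inl, hf2, Pi.single_eq_same]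
  by_cases h1 : ω u w ≠ 0
  · refine ⟨Tm (w - u) (ω u w)⁻¹, Tm_sp _ _, ?_, Tm_move h1⟩
    exact Tm_fix _ (by rw [omega_sub_right, hew, hu, sub_zero])
  · push_neg at h1
    have hd : ∃ d, ω u d ≠ 0 ∧ ω e d = 0 ∧ ω d w ≠ 0 := by
      have hd0 : ∃ d₀, ω u d₀ ≠ 0 ∧ ω e d₀ = 0 := by
        obtain ⟨k, hk⟩ := Function.ne_iff.1 (hlin (u (Sum.inl i)))
        have hki : k ≠ Sum.inl i := by
          rintro rfl
          exact hk (by rw [he, Pi.smul_apply, Pi.single_eq_same, smul_eq_mul, mul_one])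
        have hk0 : u k ≠ 0 := by
          intro h0
          exact hk (by rw [h0, he, Pi.smul_apply, Pi.single_eq_of_ne hki, smul_zero])
        rcases k with j' | j'
        · have hj'i : j' ≠ i := fun h => hki (by rw [h])
          refine ⟨Pi.single (Sum.inr j') 1, ?_, ?_⟩
          · rw [omega_single_inr]; exact hk0
          · rw [omega_single_inr, he]; simp [Pi.single_apply, hj'i]
        · refine ⟨Pi.single (Sum.inl j') 1, ?_, ?_⟩
          · rw [omega_single_inl]; simpa using hk0
          · rw [omega_single_inl, he]; simp [Pi.single_apply]
      obtain ⟨d₀, hud0, hed0⟩ := hd0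
      by_cases h2 : ω d₀ w ≠ 0
      · exact ⟨d₀, hud0, hed0, h2⟩
      · by_cases h3 : ω u f2 ≠ 0
        · exact ⟨f2, h3, hef2, by rw [hf2w]; norm_num⟩
        · push_neg at h2 h3
          refine ⟨d₀ + f2, ?_, ?_, ?_⟩
          · rw [omega_add_right, h3, add_zero]; exact hud0
          · rw [omega_add_right, hed0, hef2, add_zero]
          · rw [omega_add_left, h2, hf2w]; norm_num
    obtain ⟨d, hud, hed, hdw⟩ := hd
    set z : Fin n ⊕ Fin n → ℝ := u + d with hz
    have huz : ω u z ≠ 0 := by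
      rw [hz, omega_add_right, omega_self, zero_add]; exact hud
    have hzw : ω z w ≠ 0 := by
      rw [hz, omega_add_left, h1, zero_add]; exact hdw
    have hfix1 : Tm (z - u) (ω u z)⁻¹ *ᵥ e = e :=
      Tm_fix _ (by rw [omega_sub_right, hz, omega_add_right, hed]; ring)
    have hfix2 : Tm (w - z) (ω z w)⁻¹ *ᵥ e = e :=
      Tm_fix _ (by rw [omega_sub_right, hew, hz, omega_add_right, hu, hed]; ring)
    refine ⟨Tm (w - z) (ω z w)⁻¹ * Tm (z - u) (ω u z)⁻¹, (Tm_sp _ _).mul (Tm_sp _ _), ?_, ?_⟩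
    · rw [← mulVec_mulVec, hfix1, hfix2]
    · rw [← mulVec_mulVec, Tm_move huz, Tm_move hzw]


noncomputable def Ds (n : ℕ) (s : ℝ) : Matrix (Fin n ⊕ Fin n) (Fin n ⊕ Fin n) ℝ :=
  Matrix.diagonal (Sum.elim (fun _ : Fin n => s) (fun _ : Fin n => s⁻¹))

lemma Ds_sp (s : ℝ) (hs : s ≠ 0) : Sp (Ds n s) := by
  rw [Sp, Ds, diagonal_transpose]
  ext k l
  rw [mul_diagonal, diagonal_mul]
  rcases k with i | i <;> rcases l with j | j <;>
    simp [Jn, fromBlocks_apply₁₁, fromBlocks_apply₁₂, fromBlocks_apply₂₁, fromBlocks_apply₂₂,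
      one_apply] <;> by_cases h : i = j <;> field_simp [h]

lemma Ds_single (s : ℝ) (k : Fin n ⊕ Fin n) (x : ℝ) :
    Ds n s *ᵥ Pi.single k x =
      Pi.single k ((Sum.elim (fun _ : Fin n => s) (fun _ : Fin n => s⁻¹)) k * x) :=
  diagonal_mulVec_single _ _ _

lemma map_mulVec_complex (y : Matrix (Fin n ⊕ Fin n) (Fin n ⊕ Fin n) ℝ)
    (v w : Fin n ⊕ Fin n → ℝ) :
    (y.map (fun r => (r : ℂ))) *ᵥ (fun k => (v k : ℂ) + Complex.I * (w k : ℂ)) =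
      fun k => ((y *ᵥ v) k : ℂ) + Complex.I * ((y *ᵥ w) k : ℂ) := by
  funext k
  simp only [mulVec, dotProduct, map_apply, mul_add]
  rw [Finset.sum_add_distrib]
  congr 1
  · push_cast; rfl
  · push_cast
    rw [Finset.mul_sum]
    exact Finset.sum_congr rfl fun m _ => by ring

lemma single_complex (k : Fin n ⊕ Fin n) (x : ℝ) :
    (fun m => (((Pi.single k x : Fin n ⊕ Fin n → ℝ) m : ℝ) : ℂ)) = Pi.single k (x : ℂ) := by
  funext m
  rw [Pi.single_apply, Pi.single_apply, apply_ite (fun r : ℝ => (r : ℂ))]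
  norm_num


lemma smul_single (r x : ℝ) (k : Fin n ⊕ Fin n) :
    r • (Pi.single k x : Fin n ⊕ Fin n → ℝ) = Pi.single k (r * x) := by
  funext m
  rw [Pi.smul_apply, Pi.single_apply, Pi.single_apply, smul_eq_mul, mul_ite, mul_zero]

lemma dot_two_singles (k₁ k₂ : Fin n ⊕ Fin n) (hk : k₁ ≠ k₂) (α β : ℝ) :
    (fun m => (((Pi.single k₁ α : Fin n ⊕ Fin n → ℝ) m : ℝ) : ℂ) +
        Complex.I * (((Pi.single k₂ β : Fin n ⊕ Fin n → ℝ) m : ℝ) : ℂ)) ⬝ᵥ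
      (fun m => (((Pi.single k₁ α : Fin n ⊕ Fin n → ℝ) m : ℝ) : ℂ) +
        Complex.I * (((Pi.single k₂ β : Fin n ⊕ Fin n → ℝ) m : ℝ) : ℂ)) =
      (α : ℂ)^2 - (β : ℂ)^2 := by
  have hfun : (fun m => (((Pi.single k₁ α : Fin n ⊕ Fin n → ℝ) m : ℝ) : ℂ) +
        Complex.I * (((Pi.single k₂ β : Fin n ⊕ Fin n → ℝ) m : ℝ) : ℂ)) =
      (Pi.single k₁ (α : ℂ) : Fin n ⊕ Fin n → ℂ) +
        (Pi.single k₂ (Complex.I * β) : Fin n ⊕ Fin n → ℂ) := by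
    funext m
    rw [Pi.add_apply, congrFun (single_complex k₁ α) m, congrFun (single_complex k₂ β) m,
      Pi.single_apply, Pi.single_apply, Pi.single_apply, mul_ite, mul_zero]
  rw [hfun, add_dotProduct, dotProduct_add, dotProduct_add, single_dotProduct,
    single_dotProduct, single_dotProduct, single_dotProduct]
  simp only [Pi.add_apply, Pi.single_eq_same, Pi.single_eq_of_ne hk, Pi.single_eq_of_ne (Ne.symm hk),
    add_zero, zero_add]
  ring_nf
  rw [Complex.I_sq]
  ring

end Stmt10Aux

open Stmt10Aux in
theorem stmt_10 (n : ℕ) (hn : 2 ≤ n) (a₁ a₂ : Fin n ⊕ Fin n → ℝ)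
    (hind : LinearIndependent ℝ ![a₁, a₂])
    (a : Fin n ⊕ Fin n → ℂ) (ha : a = fun i => (a₁ i : ℂ) + Complex.I * (a₂ i : ℂ))
    (J : Matrix (Fin n ⊕ Fin n) (Fin n ⊕ Fin n) ℝ)
    (hJ : J = Matrix.fromBlocks 0 1 (-1) 0) :
    ∃ x : Matrix (Fin n ⊕ Fin n) (Fin n ⊕ Fin n) ℝ, IsUnit x ∧ x * J * xᵀ = J ∧
      ((x.map (fun r => (r : ℂ)))ᵀ *ᵥ a) ⬝ᵥ ((x.map (fun r => (r : ℂ)))ᵀ *ᵥ a) = 0 := by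
  classical
  subst hJ ha
  have hJn : (Matrix.fromBlocks 0 1 (-1) 0 : Matrix (Fin n ⊕ Fin n) (Fin n ⊕ Fin n) ℝ) = Jn n := rfl
  obtain ⟨ha2, hprop⟩ := linearIndependent_fin2.mp hind
  simp only [Matrix.cons_val_one, Matrix.head_cons, Matrix.cons_val_zero] at ha2 hprop
  have ha1 : a₁ ≠ 0 := by
    intro h
    exact hprop 0 (by simp [h])
  set i0 : Fin n := ⟨0, by omega⟩ with hi0
  set i1 : Fin n := ⟨1, by omega⟩ with hi1
  have hi01 : i0 ≠ i1 := by
    rw [hi0, hi1]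
    intro h
    simpa using congrArg Fin.val h
  obtain ⟨y₁, hy₁, hy₁a⟩ := to_E1 i0 a₁ ha1
  set c := ω a₁ a₂ with hc
  have hE1u : ω (Pi.single (Sum.inl i0) 1) (y₁ *ᵥ a₂) = c := by
    rw [← hy₁a, hy₁.omega]
  by_cases hcz : c = 0
  · -- isotropic case : send (a₁, a₂) to (E₁, E₂)
    have hinj : Function.Injective (y₁.mulVec) := by
      have hdet := (Matrix.isUnit_iff_isUnit_det _).1 hy₁.isUnit
      have := Matrix.invertibleOfIsUnitDet y₁ hdet
      exact Matrix.mulVec_injective_of_invertible y₁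
    have hulin : ∀ r : ℝ, y₁ *ᵥ a₂ ≠ r • (Pi.single (Sum.inl i0) 1 : Fin n ⊕ Fin n → ℝ) := by
      intro r hr
      rw [← hy₁a, ← mulVec_smul] at hr
      have h2 : a₂ = r • a₁ := hinj hr
      rcases eq_or_ne r 0 with h0 | h0
      · exact ha2 (by simp [h2, h0])
      · exact hprop r⁻¹ (by rw [h2, smul_smul, inv_mul_cancel₀ h0, one_smul])
    obtain ⟨y₂, hy₂, hy₂e, hy₂u⟩ := fix_move_zero i0 i1 hi01 _ (hE1u.trans hcz) hulin
    set y := y₂ * y₁ with hy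
    have hSp : Sp y := hy₂.mul hy₁
    have hb1 : y *ᵥ a₁ = Pi.single (Sum.inl i0) 1 := by
      rw [hy, ← mulVec_mulVec, hy₁a, hy₂e]
    have hb2 : y *ᵥ a₂ = Pi.single (Sum.inl i1) 1 := by
      rw [hy, ← mulVec_mulVec, hy₂u]
    refine ⟨yᵀ, hSp.transpose.isUnit, ?_, ?_⟩
    · rw [hJn]
      exact hSp.transpose
    · rw [Matrix.transpose_map, transpose_transpose, map_mulVec_complex, hb1, hb2,
        dot_two_singles _ _ (fun h => hi01 (Sum.inl_injective h)) 1 1]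
      ring
  · -- non-isotropic case : send (a₁, a₂) to (s·E₁, (c/s)·F₁)
    obtain ⟨y₂, hy₂, hy₂e, hy₂u⟩ := fix_move_ne i0 _ c hcz hE1u
    set s := Real.sqrt |c| with hs
    have hs0 : s ≠ 0 := by
      rw [hs]
      exact Real.sqrt_ne_zero'.2 (abs_pos.2 hcz)
    have hs2 : s ^ 2 = |c| := Real.sq_sqrt (abs_nonneg c)
    set y := Ds n s * (y₂ * y₁) with hy
    have hSp : Sp y := (Ds_sp s hs0).mul (hy₂.mul hy₁)
    have hb1 : y *ᵥ a₁ = Pi.single (Sum.inl i0) (s * 1) := by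
      rw [hy, ← mulVec_mulVec, ← mulVec_mulVec, hy₁a, hy₂e, Ds_single]
      rfl
    have hb2 : y *ᵥ a₂ = Pi.single (Sum.inr i0) (c * (s⁻¹ * 1)) := by
      rw [hy, ← mulVec_mulVec, ← mulVec_mulVec, hy₂u, mulVec_smul, Ds_single, smul_single]
      rfl
    refine ⟨yᵀ, hSp.transpose.isUnit, ?_, ?_⟩
    · rw [hJn]
      exact hSp.transpose
    · rw [Matrix.transpose_map, transpose_transpose, map_mulVec_complex, hb1, hb2,
        dot_two_singles _ _ (by simp) (s * 1) (c * (s⁻¹ * 1))]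
      have hval : (s * 1) ^ 2 - (c * (s⁻¹ * 1)) ^ 2 = 0 := by
        rw [mul_one, mul_one]
        have h2 : (c * s⁻¹) ^ 2 = |c| := by
          rw [mul_pow, inv_pow, hs2, ← _root_.sq_abs c, sq, mul_assoc,
            mul_inv_cancel₀ (abs_ne_zero.2 hcz), mul_one]
        rw [h2, hs2, sub_self]
      calc ((s * 1 : ℝ) : ℂ) ^ 2 - ((c * (s⁻¹ * 1) : ℝ) : ℂ) ^ 2
          = (((s * 1) ^ 2 - (c * (s⁻¹ * 1)) ^ 2 : ℝ) : ℂ) := by push_cast; ring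
        _ = 0 := by rw [hval]; norm_num
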